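/- Let a, b, c, T be real numbers with 0 < c < b, a < b and b < T. Then ∫_{b}^{T} ((σ − b)^{−1/2} − (σ − a)^{−1/2}) (σ − c)^{−1/2} dσ = ln( (√(T−b) + √(T−c))² (√(b−a) + √(b−c))² / ((√(T−a) + √(T−c))² (b−c)) ). -/

import Mathlib

open MeasureTheory Set

lemma stmt8_aux_deriv (p c σ : ℝ) (hp : p < σ) (hc : c < σ) :
    HasDerivAt (fun σ => Real.log ((Real.sqrt (σ - p) + Real.sqrt (σ - c)) ^ 2))
      ((Real.sqrt (σ - p))⁻¹ * (Real.sqrt (σ - c))⁻¹) σ := by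
  have hup : (0:ℝ) < σ - p := by linarith
  have huc : (0:ℝ) < σ - c := by linarith
  have hsp : 0 < Real.sqrt (σ - p) := Real.sqrt_pos.2 hup
  have hsc : 0 < Real.sqrt (σ - c) := Real.sqrt_pos.2 huc
  have h1 : HasDerivAt (fun σ => Real.sqrt (σ - p)) (1 / (2 * Real.sqrt (σ - p))) σ := by
    have := (Real.hasDerivAt_sqrt hup.ne').comp σ ((hasDerivAt_id σ).sub_const p)
    simpa [Function.comp_def] using this
  have h2 : HasDerivAt (fun σ => Real.sqrt (σ - c)) (1 / (2 * Real.sqrt (σ - c))) σ := by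
    have := (Real.hasDerivAt_sqrt huc.ne').comp σ ((hasDerivAt_id σ).sub_const c)
    simpa [Function.comp_def] using this
  have hsum := h1.add h2
  have hsq := hsum.pow 2
  have hne : (Real.sqrt (σ - p) + Real.sqrt (σ - c)) ^ 2 ≠ 0 := by positivity
  have hlog := hsq.log hne
  convert hlog using 1
  · rfl
  simp only [Pi.add_apply, Pi.pow_apply]
  field_simp
  ring

theorem stmt_8 (a b c T : ℝ) (hc : 0 < c) (hcb : c < b) (hab : a < b) (hbT : b < T) :
    (∫⁻ σ in Ioo b T,
        ENNReal.ofReal (((Real.sqrt (σ - b))⁻¹ - (Real.sqrt (σ - a))⁻¹) *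
          (Real.sqrt (σ - c))⁻¹)) =
      ENNReal.ofReal (Real.log
        ((Real.sqrt (T - b) + Real.sqrt (T - c)) ^ 2 *
            (Real.sqrt (b - a) + Real.sqrt (b - c)) ^ 2 /
          ((Real.sqrt (T - a) + Real.sqrt (T - c)) ^ 2 * (b - c)))) := by
  set f : ℝ → ℝ := fun σ =>
    ((Real.sqrt (σ - b))⁻¹ - (Real.sqrt (σ - a))⁻¹) * (Real.sqrt (σ - c))⁻¹ with hf
  set F : ℝ → ℝ := fun σ =>
    Real.log ((Real.sqrt (σ - b) + Real.sqrt (σ - c)) ^ 2) -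
    Real.log ((Real.sqrt (σ - a) + Real.sqrt (σ - c)) ^ 2) with hF
  -- continuity of F on Icc b T
  have hcont : ContinuousOn F (Icc b T) := by
    have hc1 : ∀ p : ℝ, p ≤ b → ContinuousOn
        (fun σ => Real.log ((Real.sqrt (σ - p) + Real.sqrt (σ - c)) ^ 2)) (Icc b T) := by
      intro p hpb
      apply ContinuousOn.log
      · fun_prop
      · intro σ hσ
        have h1 : 0 < Real.sqrt (σ - c) := Real.sqrt_pos.2 (by linarith [hσ.1])
        have h2 : 0 ≤ Real.sqrt (σ - p) := Real.sqrt_nonneg _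
        positivity
    exact (hc1 b le_rfl).sub (hc1 a hab.le)
  -- derivative
  have hderiv : ∀ σ ∈ Ioo b T, HasDerivAt F (f σ) σ := by
    intro σ hσ
    have h1 := stmt8_aux_deriv b c σ hσ.1 (lt_trans hcb hσ.1)
    have h2 := stmt8_aux_deriv a c σ (lt_trans hab hσ.1) (lt_trans hcb hσ.1)
    have := h1.sub h2
    refine this.congr_deriv ?_
    show _ = ((Real.sqrt (σ - b))⁻¹ - (Real.sqrt (σ - a))⁻¹) * (Real.sqrt (σ - c))⁻¹
    ring
  have hderiv' : ∀ σ ∈ Ioo b T, HasDerivWithinAt F (f σ) (Ioi σ) σ :=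
    fun σ hσ => (hderiv σ hσ).hasDerivWithinAt
  -- nonnegativity
  have hpos : ∀ σ ∈ Ioo b T, 0 ≤ f σ := by
    intro σ hσ
    have h1 : 0 < Real.sqrt (σ - b) := Real.sqrt_pos.2 (by linarith [hσ.1])
    have h2 : Real.sqrt (σ - b) ≤ Real.sqrt (σ - a) :=
      Real.sqrt_le_sqrt (by linarith)
    have h3 : (Real.sqrt (σ - a))⁻¹ ≤ (Real.sqrt (σ - b))⁻¹ :=
      inv_anti₀ h1 h2
    have h4 : 0 ≤ (Real.sqrt (σ - c))⁻¹ := by positivity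
    exact mul_nonneg (by linarith) h4
  -- integrability
  have hint : IntegrableOn f (Ioc b T) :=
    intervalIntegral.integrableOn_deriv_right_of_nonneg hcont hderiv' hpos
  have hintIoo : IntegrableOn f (Ioo b T) := hint.mono_set Ioo_subset_Ioc_self
  -- FTC
  have hftc : ∫ σ in b..T, f σ = F T - F b :=
    intervalIntegral.integral_eq_sub_of_hasDeriv_right_of_le hbT.le hcont hderiv'
      ((intervalIntegrable_iff_integrableOn_Ioc_of_le hbT.le).2 hint)
  have hIoo : ∫ σ in Ioo b T, f σ = F T - F b := by
    rw [← MeasureTheory.integral_Ioc_eq_integral_Ioo, ← intervalIntegral.integral_of_le hbT.le]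
    exact hftc
  -- convert lintegral
  have hae : 0 ≤ᵐ[volume.restrict (Ioo b T)] f :=
    (ae_restrict_iff' measurableSet_Ioo).2 (Filter.Eventually.of_forall hpos)
  have hL : (∫⁻ σ in Ioo b T, ENNReal.ofReal (f σ)) = ENNReal.ofReal (∫ σ in Ioo b T, f σ) :=
    (MeasureTheory.ofReal_integral_eq_lintegral_ofReal hintIoo hae).symm
  rw [hL, hIoo]
  congr 1
  -- log algebra
  have hTb : 0 < Real.sqrt (T - b) := Real.sqrt_pos.2 (by linarith)
  have hTc : 0 < Real.sqrt (T - c) := Real.sqrt_pos.2 (by linarith)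
  have hTa : 0 < Real.sqrt (T - a) := Real.sqrt_pos.2 (by linarith)
  have hba : 0 < Real.sqrt (b - a) := Real.sqrt_pos.2 (by linarith)
  have hbc : 0 < Real.sqrt (b - c) := Real.sqrt_pos.2 (by linarith)
  have hX : (0:ℝ) < (Real.sqrt (T - b) + Real.sqrt (T - c)) ^ 2 := by positivity
  have hY : (0:ℝ) < (Real.sqrt (b - a) + Real.sqrt (b - c)) ^ 2 := by positivity
  have hZ : (0:ℝ) < (Real.sqrt (T - a) + Real.sqrt (T - c)) ^ 2 := by positivity
  have hW : (0:ℝ) < b - c := by linarith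
  have hFb : F b = Real.log (b - c) -
      Real.log ((Real.sqrt (b - a) + Real.sqrt (b - c)) ^ 2) := by
    simp only [hF, sub_self, Real.sqrt_zero, zero_add, Real.sq_sqrt hW.le]
  rw [hFb, hF]
  rw [Real.log_div (by positivity) (by positivity), Real.log_mul hX.ne' hY.ne',
    Real.log_mul hZ.ne' hW.ne']
  ring
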